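/- Let χ be a real character mod D with χ(p) = 1 for every prime p < c·log D (c > 0 fixed), and λ = 1∗χ. Then ∑_{n≤D} λ(n)/n ≫ (log log D)², with implied constant depending only on c. -/

import Mathlib

open Real Finset

section Aux

variable {D : ℕ} [NeZero D]

/-- A real Dirichlet character takes values in `{-1, 0, 1}`. -/
lemma char_vals (χ : DirichletCharacter ℝ D) (a : ZMod D) :
    χ a = 0 ∨ χ a = 1 ∨ χ a = -1 := by
  by_cases h : IsUnit a
  · right
    obtain ⟨u, rfl⟩ := h
    have h1 : χ ↑u ^ Fintype.card (ZMod D)ˣ = 1 := by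
      rw [← map_pow, ← Units.val_pow_eq_pow_val, pow_card_eq_one, Units.val_one, map_one]
    rcases (pow_eq_one_iff_of_ne_zero Fintype.card_ne_zero).mp h1 with h | h
    · exact Or.inl h
    · exact Or.inr h.1
  · exact Or.inl (χ.map_nonunit h)

/-- `λ = 1 ∗ χ` is nonnegative for a real Dirichlet character `χ`. -/
lemma lambda_nonneg (χ : DirichletCharacter ℝ D) (n : ℕ) :
    0 ≤ ∑ d ∈ n.divisors, χ d := by
  have key : ∀ m : ℕ, 0 ≤ (ArithmeticFunction.zeta * toArithmeticFunction (χ ·) :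
      ArithmeticFunction ℝ) m := by
    intro m
    rcases eq_or_ne m 0 with rfl | hm
    · simp
    have hmul : (ArithmeticFunction.zeta * toArithmeticFunction (χ ·) :
        ArithmeticFunction ℝ).IsMultiplicative :=
      ArithmeticFunction.isMultiplicative_zeta.natCast.mul <|
        DirichletCharacter.isMultiplicative_toArithmeticFunction χ
    rw [hmul.multiplicative_factorization _ hm]
    refine Finset.prod_nonneg fun p hp ↦ ?_
    have hpp : p.Prime := Nat.prime_of_mem_primeFactors hp
    dsimp only
    rw [ArithmeticFunction.coe_zeta_mul_apply]
    have hrw : ∀ d ∈ (p ^ m.factorization p).divisors,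
        toArithmeticFunction (χ ·) d = χ d := by
      intro d hd
      exact (DirichletCharacter.apply_eq_toArithmeticFunction_apply χ
        (Nat.pos_of_mem_divisors hd).ne').symm
    rw [Finset.sum_congr rfl hrw, Nat.sum_divisors_prime_pow hpp]
    have hpow : ∀ i : ℕ, χ ((p : ℕ) ^ i : ℕ) = (χ p) ^ i := by
      intro i
      rw [Nat.cast_pow, map_pow]
    rw [Finset.sum_congr rfl fun i _ ↦ hpow i]
    rcases char_vals χ p with h | h | h
    · exact Finset.sum_nonneg fun i _ ↦ by rw [h]; positivity
    · exact Finset.sum_nonneg fun i _ ↦ by rw [h, one_pow]; norm_num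
    · rw [h, neg_one_geom_sum]
      split_ifs
      exacts [le_rfl, zero_le_one]
  have := key n
  rcases eq_or_ne n 0 with rfl | hn
  · simp
  rwa [ArithmeticFunction.coe_zeta_mul_apply, Finset.sum_congr rfl
    (fun d hd ↦ (DirichletCharacter.apply_eq_toArithmeticFunction_apply χ
      (Nat.pos_of_mem_divisors hd).ne').symm)] at this

/-- If `χ(p) = 1` for all primes dividing `d`, then `χ(d) = 1`. -/
lemma chi_eq_one (χ : DirichletCharacter ℝ D) :
    ∀ d : ℕ, d ≠ 0 → (∀ p : ℕ, p.Prime → p ∣ d → χ p = 1) → χ d = 1 := by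
  intro d
  induction d using Nat.recOnMul with
  | zero => intro h; exact absurd rfl h
  | one => intro _ _; simpa using map_one χ
  | prime p hp => intro _ h; exact h p hp dvd_rfl
  | mul a b ha hb =>
    intro hab h
    have ha0 : a ≠ 0 := left_ne_zero_of_mul hab
    have hb0 : b ≠ 0 := right_ne_zero_of_mul hab
    have : ((a * b : ℕ) : ZMod D) = (a : ZMod D) * b := by push_cast; ring
    rw [this, map_mul, ha ha0 (fun p hp hpd ↦ h p hp (hpd.mul_right b)),
      hb hb0 (fun p hp hpd ↦ h p hp (hpd.mul_left a)), mul_one]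

/-- The key counting inequality. -/
lemma key_count (χ : DirichletCharacter ℝ D) (N : ℕ) (hND : N * N ≤ D)
    (hχ : ∀ p : ℕ, p.Prime → p ≤ N → χ p = 1) :
    (∑ a ∈ Icc 1 N, (a : ℝ)⁻¹) ^ 2 ≤ ∑ n ∈ Icc 1 D, (∑ d ∈ n.divisors, χ d) / n := by
  have hD1 : 1 ≤ D := le_trans (Nat.one_le_iff_ne_zero.mpr (NeZero.ne D)) le_rfl
  -- rewrite the square as a sum over pairs
  have h1 : (∑ a ∈ Icc 1 N, (a : ℝ)⁻¹) ^ 2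
      = ∑ q ∈ Icc 1 N ×ˢ Icc 1 N, ((q.1 : ℝ)⁻¹ * (q.2 : ℝ)⁻¹) := by
    rw [sq, Finset.sum_mul_sum, ← Finset.sum_product']
  have hmaps : ∀ q ∈ Icc 1 N ×ˢ Icc 1 N, q.1 * q.2 ∈ Icc 1 D := by
    rintro ⟨a, b⟩ hq
    rw [Finset.mem_product, Finset.mem_Icc, Finset.mem_Icc] at hq
    refine Finset.mem_Icc.mpr ⟨Nat.one_le_iff_ne_zero.mpr ?_, ?_⟩
    · exact Nat.mul_ne_zero (by omega) (by omega)
    · exact le_trans (Nat.mul_le_mul hq.1.2 hq.2.2) hND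
  rw [h1, ← Finset.sum_fiberwise_of_maps_to hmaps]
  refine Finset.sum_le_sum fun n hn ↦ ?_
  rw [Finset.mem_Icc] at hn
  have hn0 : (n : ℝ) ≠ 0 := Nat.cast_ne_zero.mpr (by omega)
  set S := (Icc 1 N ×ˢ Icc 1 N).filter (fun q : ℕ × ℕ => q.1 * q.2 = n) with hS
  have hsum : ∑ q ∈ S, ((q.1 : ℝ)⁻¹ * (q.2 : ℝ)⁻¹) = S.card * (n : ℝ)⁻¹ := by
    rw [Finset.sum_congr rfl (g := fun _ => (n : ℝ)⁻¹) ?_, Finset.sum_const, nsmul_eq_mul]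
    rintro ⟨a, b⟩ hq
    rw [hS, Finset.mem_filter] at hq
    have hab : a * b = n := hq.2
    rw [Finset.mem_product, Finset.mem_Icc, Finset.mem_Icc] at hq
    subst hab
    push_cast
    rw [mul_inv]
  rw [hsum]
  rcases S.eq_empty_or_nonempty with hSe | hSne
  · rw [hSe]
    simp only [Finset.card_empty, Nat.cast_zero, zero_mul]
    exact div_nonneg (lambda_nonneg χ n) (by positivity)
  · obtain ⟨⟨a, b⟩, hq⟩ := hSne
    rw [hS, Finset.mem_filter, Finset.mem_product, Finset.mem_Icc, Finset.mem_Icc] at hq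
    obtain ⟨⟨⟨ha1, haN⟩, ⟨hb1, hbN⟩⟩, hab⟩ := hq
    -- every divisor `d` of `n` has all prime factors `≤ N`, so `χ d = 1`
    have hchi : ∀ d ∈ n.divisors, χ d = 1 := by
      intro d hd
      obtain ⟨hdvd, hne⟩ := Nat.mem_divisors.mp hd
      refine chi_eq_one χ d (fun h0 ↦ by simp [h0] at hdvd; omega) ?_
      intro p hp hpd
      refine hχ p hp ?_
      have hpn : p ∣ a * b := hab ▸ hpd.trans hdvd
      rcases hp.dvd_mul.mp hpn with h | h
      · exact le_trans (Nat.le_of_dvd (by omega) h) haN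
      · exact le_trans (Nat.le_of_dvd (by omega) h) hbN
    rw [Finset.sum_congr rfl hchi, Finset.sum_const, nsmul_eq_mul, mul_one,
      div_eq_mul_inv]
    refine mul_le_mul_of_nonneg_right ?_ (by positivity)
    -- `S.card ≤ n.divisors.card` by injectivity of `q ↦ q.1`
    have hcard : S.card ≤ n.divisors.card := by
      refine Finset.card_le_card_of_injOn (fun q => q.1) ?_ ?_
      · rintro ⟨x, y⟩ hxy
        rw [hS, Finset.mem_coe, Finset.mem_filter, Finset.mem_product, Finset.mem_Icc, Finset.mem_Icc] at hxy
        exact Nat.mem_divisors.mpr ⟨⟨y, hxy.2.symm⟩, by omega⟩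
      · rintro ⟨x, y⟩ hxy ⟨x', y'⟩ hxy' hxx
        simp only [Finset.mem_coe, hS, Finset.mem_filter, Finset.mem_product,
          Finset.mem_Icc] at hxy hxy'
        simp only at hxx
        subst hxx
        have hx0 : x ≠ 0 := by omega
        have hy : y = y' := by
          have := hxy.2.trans hxy'.2.symm
          exact Nat.eq_of_mul_eq_mul_left (by omega) this
        simp [hy]
    exact_mod_cast hcard

end Aux

set_option maxHeartbeats 1000000 in
/-- If `χ` is a real character mod `D` with `χ(p) = 1` for every prime `p < c log D`,
and `λ = 1 ∗ χ`, then `∑_{n ≤ D} λ(n)/n ≫ (log log D)²`, the implied constant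
depending only on `c`. -/
theorem sum_lambda_large (c : ℝ) (hc : 0 < c) :
    ∃ k : ℝ, 0 < k ∧ ∀ (D : ℕ) [NeZero D], 16 ≤ D →
      ∀ χ : DirichletCharacter ℝ D,
        (∀ p : ℕ, p.Prime → (p : ℝ) < c * Real.log D → χ p = 1) →
        k * (Real.log (Real.log D)) ^ 2
          ≤ ∑ n ∈ Finset.Icc 1 D, (∑ d ∈ n.divisors, χ d) / (n : ℝ) := by
  set c' : ℝ := min c 1 with hc'def
  have hc'0 : 0 < c' := lt_min hc zero_lt_one
  have hc'1 : c' ≤ 1 := min_le_right c 1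
  have hc'c : c' ≤ c := min_le_left c 1
  set M : ℝ := 16 / c' ^ 2 with hMdef
  have hM16 : (16 : ℝ) ≤ M := by
    rw [hMdef, le_div_iff₀ (by positivity)]
    nlinarith
  have hlogM : 0 < Real.log M := Real.log_pos (by linarith)
  refine ⟨min (1/4) (1 / (Real.log M) ^ 2), lt_min (by norm_num) (by positivity), ?_⟩
  intro D _ hD χ hχ
  set k : ℝ := min (1/4) (1 / (Real.log M) ^ 2) with hkdef
  have hD16 : (16 : ℝ) ≤ (D : ℝ) := by exact_mod_cast hD
  set L : ℝ := Real.log D with hLdef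
  have hL16 : Real.log 16 ≤ L := Real.log_le_log (by norm_num) hD16
  have hlog16 : (2 : ℝ) < Real.log 16 := by
    have h := Real.exp_one_lt_d9
    calc (2:ℝ) = Real.log (Real.exp 2) := (Real.log_exp 2).symm
      _ < Real.log 16 := by
          refine Real.log_lt_log (Real.exp_pos 2) ?_
          have : Real.exp 2 = Real.exp 1 * Real.exp 1 := by
            rw [← Real.exp_add]; norm_num
          rw [this]
          nlinarith [Real.exp_one_lt_d9, Real.exp_pos 1]
  have hL2 : (2 : ℝ) < L := lt_of_lt_of_le hlog16 hL16
  have ht0 : 0 < Real.log L := Real.log_pos (by linarith)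
  by_cases hcase : M ≤ L
  · -- main case: `D` is large
    set s : ℝ := Real.sqrt L with hsdef
    have hs0 : 0 ≤ s := Real.sqrt_nonneg L
    have hs2 : s ^ 2 = L := Real.sq_sqrt (by linarith)
    have hcs : 4 ≤ c' * s := by
      have h16 : 16 ≤ c' ^ 2 * L := by
        rw [hMdef] at hcase
        rw [div_le_iff₀ (by positivity)] at hcase
        linarith [hcase]
      have h16' : (4 : ℝ) ^ 2 ≤ (c' * s) ^ 2 := by
        rw [mul_pow, hs2]; norm_num; linarith
      exact (pow_le_pow_iff_left₀ (by norm_num) (mul_nonneg hc'0.le hs0) two_ne_zero).mp h16'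
    have hs4 : 4 ≤ s := by
      have h16' : (4 : ℝ) ^ 2 ≤ s ^ 2 := by
        rw [hs2]; norm_num; nlinarith
      exact (pow_le_pow_iff_left₀ (by norm_num) hs0 two_ne_zero).mp h16'
    have hc'L4 : 4 * s ≤ c' * L := by
      have h1 : c' * L = (c' * s) * s := by rw [← hs2]; ring
      rw [h1]
      exact mul_le_mul_of_nonneg_right hcs hs0
    have hkey : s ≤ c' * L / 2 - 1 := by linarith
    set N : ℕ := ⌊c' * L / 2⌋₊ with hNdef
    have hNle : (N : ℝ) ≤ c' * L / 2 := Nat.floor_le (by positivity)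
    have hNgt : c' * L / 2 - 1 < (N : ℝ) := Nat.sub_one_lt_floor _
    have hsN : s ≤ (N : ℝ) := le_trans hkey hNgt.le
    -- `N * N ≤ D`
    have hsd2 : Real.sqrt D ^ 2 = (D : ℝ) := Real.sq_sqrt (by positivity)
    have hsd0 : 0 < Real.sqrt D := Real.sqrt_pos.mpr (by linarith)
    have hLsd : L ≤ 2 * Real.sqrt D := by
      have h1 : Real.log (Real.sqrt D) ≤ Real.sqrt D - 1 :=
        Real.log_le_sub_one_of_pos hsd0
      have h2 : Real.log (Real.sqrt D) = L / 2 := by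
        rw [hLdef, Real.log_sqrt (by positivity)]
      linarith
    have hND : N * N ≤ D := by
      have hc'LL : c' * L ≤ L := by
        have := mul_le_mul_of_nonneg_right hc'1 (by linarith : (0:ℝ) ≤ L)
        linarith
      have hNsd : (N : ℝ) ≤ Real.sqrt D := by linarith
      have h1 : (N : ℝ) * (N : ℝ) ≤ (D : ℝ) := by
        calc (N : ℝ) * (N : ℝ) ≤ Real.sqrt D * Real.sqrt D :=
              mul_self_le_mul_self (Nat.cast_nonneg N) hNsd
          _ = (D : ℝ) := Real.mul_self_sqrt (by positivity)
      exact_mod_cast h1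
    -- primes `p ≤ N` satisfy `χ p = 1`
    have hχ' : ∀ p : ℕ, p.Prime → p ≤ N → χ p = 1 := by
      intro p hp hpN
      refine hχ p hp ?_
      have : (p : ℝ) ≤ (N : ℝ) := by exact_mod_cast hpN
      have hcL : 0 < c' * L := by positivity
      calc (p : ℝ) ≤ (N : ℝ) := this
        _ ≤ c' * L / 2 := hNle
        _ < c' * L := by linarith
        _ ≤ c * L := mul_le_mul_of_nonneg_right hc'c (by linarith)
    have hmain := key_count χ N hND hχ'
    refine le_trans ?_ hmain
    -- harmonic sum lower bound
    have hharm : Real.log ((N : ℝ) + 1) ≤ ∑ a ∈ Icc 1 N, (a : ℝ)⁻¹ := by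
      have h1 := log_add_one_le_harmonic N
      have h2 : ((harmonic N : ℚ) : ℝ) = ∑ a ∈ Icc 1 N, (a : ℝ)⁻¹ := by
        rw [harmonic_eq_sum_Icc]
        push_cast
        rfl
      rw [h2] at h1
      exact_mod_cast h1
    have hlogN : Real.log L / 2 ≤ Real.log ((N : ℝ) + 1) := by
      have h1 : Real.log s ≤ Real.log ((N : ℝ) + 1) :=
        Real.log_le_log (by linarith) (by linarith)
      have h2 : Real.log s = Real.log L / 2 := by
        rw [hsdef, Real.log_sqrt (by linarith)]
      linarith
    have hsum : Real.log L / 2 ≤ ∑ a ∈ Icc 1 N, (a : ℝ)⁻¹ := le_trans hlogN hharm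
    calc k * (Real.log L) ^ 2 ≤ (1/4) * (Real.log L) ^ 2 := by
          refine mul_le_mul_of_nonneg_right (min_le_left _ _) (by positivity)
      _ = (Real.log L / 2) ^ 2 := by ring
      _ ≤ (∑ a ∈ Icc 1 N, (a : ℝ)⁻¹) ^ 2 := by
          refine pow_le_pow_left₀ (by positivity) hsum 2
  · -- small case: the term `n = 1` alone suffices
    push_neg at hcase
    have h1 : (1 : ℝ) ≤ ∑ n ∈ Finset.Icc 1 D, (∑ d ∈ n.divisors, χ d) / (n : ℝ) := by
      have hmem : 1 ∈ Finset.Icc 1 D := Finset.mem_Icc.mpr ⟨le_rfl, by omega⟩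
      have hterm : (∑ d ∈ (1 : ℕ).divisors, χ d) / ((1 : ℕ) : ℝ) = 1 := by
        simp [Nat.divisors_one]
      calc (1 : ℝ) = (∑ d ∈ (1 : ℕ).divisors, χ d) / ((1 : ℕ) : ℝ) := hterm.symm
        _ ≤ _ := by
            refine Finset.single_le_sum (f := fun n : ℕ => (∑ d ∈ n.divisors, χ d) / (n : ℝ))
              (fun n hn ↦ ?_) hmem
            exact div_nonneg (lambda_nonneg χ n) (by positivity)
    have ht : Real.log L ≤ Real.log M := Real.log_le_log (by linarith) hcase.le
    have hk : k ≤ 1 / (Real.log M) ^ 2 := min_le_right _ _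
    have : k * (Real.log L) ^ 2 ≤ (1 / (Real.log M) ^ 2) * (Real.log M) ^ 2 := by
      refine mul_le_mul hk (pow_le_pow_left₀ ht0.le ht 2) (by positivity) (by positivity)
    rw [one_div, inv_mul_cancel₀ (by positivity)] at this
    linarith
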